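/- Let $\omega$ be a weight function satisfying $\omega(2t) = O(\omega(t))$ and let $\mathfrak{M}_\omega = (M^n)$ with $M^n_p = \exp(\tfrac1n \phi_\omega^*(np))$. Then $\mathfrak{M}_\omega$ satisfies condition $\{\mathfrak{M}.2\}'$: for every $n \ge 1$ there exist $m \ge 1$ and $C, H > 0$ such that $M^n_{p+1} \le C H^p M^m_p$ for all $p \in \mathbb{N}$. -/
import Mathlib


open Asymptotics Filter

/-- The weight matrix `𝔐_ω`, `M^n_p = exp(φ*(np)/n)`, satisfies `{𝔐.2}'`:
for every `n ≥ 1` there are `m ≥ 1` and `C, H > 0` with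
`M^n_{p+1} ≤ C Hᵖ M^m_p` for all `p`. -/
theorem stmt8 (ω : ℝ → ℝ) (hcont : ContinuousOn ω (Set.Ici 0))
    (hmono : MonotoneOn ω (Set.Ici 0))
    (hzero : ∀ t ∈ Set.Icc (0 : ℝ) 1, ω t = 0)
    (hnonneg : ∀ t : ℝ, 0 ≤ t → 0 ≤ ω t)
    (hO : (fun t => ω (2 * t)) =O[atTop] ω)
    (hlog : (fun t => Real.log t) =o[atTop] ω)
    (φ : ℝ → ℝ) (hφ : ∀ x : ℝ, 0 ≤ x → φ x = ω (Real.exp x))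
    (hconv : ConvexOn ℝ (Set.Ici 0) φ)
    (φs : ℝ → ℝ)
    (hφs : ∀ y : ℝ, 0 ≤ y →
      IsLUB {z : ℝ | ∃ x : ℝ, 0 ≤ x ∧ z = x * y - φ x} (φs y)) :
    ∀ n : ℕ, 1 ≤ n → ∃ m : ℕ, 1 ≤ m ∧ ∃ C : ℝ, 0 < C ∧ ∃ H : ℝ, 0 < H ∧
      ∀ p : ℕ, Real.exp ((1 / (n : ℝ)) * φs ((n : ℝ) * ((p : ℝ) + 1))) ≤
        C * H ^ p * Real.exp ((1 / (m : ℝ)) * φs ((m : ℝ) * (p : ℝ))) := by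
  intro n hn
  refine ⟨2 * n, by omega, Real.exp ((1 / ((2 * n : ℕ) : ℝ)) * φs ((2 * n : ℕ) : ℝ)),
    Real.exp_pos _, 1, one_pos, ?_⟩
  intro p
  have hnpos : (0 : ℝ) < n := by exact_mod_cast hn
  have hmcast : (((2 * n : ℕ) : ℝ)) = 2 * (n : ℝ) := by push_cast; ring
  rw [hmcast, one_pow, mul_one, ← Real.exp_add, Real.exp_le_exp]
  -- key midpoint convexity inequality
  have hppos : (0 : ℝ) ≤ (p : ℝ) := Nat.cast_nonneg p
  have h1 : (0 : ℝ) ≤ (n : ℝ) * ((p : ℝ) + 1) := by positivity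
  have h2 : (0 : ℝ) ≤ 2 * (n : ℝ) * (p : ℝ) := by positivity
  have h3 : (0 : ℝ) ≤ 2 * (n : ℝ) := by positivity
  have lub1 := hφs _ h1
  have lub2 := hφs _ h2
  have lub3 := hφs _ h3
  have key : φs ((n : ℝ) * ((p : ℝ) + 1)) ≤
      (1 / 2) * φs (2 * (n : ℝ) * (p : ℝ)) + (1 / 2) * φs (2 * (n : ℝ)) := by
    apply lub1.2
    rintro z ⟨x, hx, rfl⟩
    have e2 : x * (2 * (n : ℝ) * (p : ℝ)) - φ x ≤ φs (2 * (n : ℝ) * (p : ℝ)) :=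
      lub2.1 ⟨x, hx, rfl⟩
    have e3 : x * (2 * (n : ℝ)) - φ x ≤ φs (2 * (n : ℝ)) := lub3.1 ⟨x, hx, rfl⟩
    nlinarith [e2, e3]
  have h2n : (0 : ℝ) < 2 * (n : ℝ) := by positivity
  have : (1 / (n : ℝ)) * φs ((n : ℝ) * ((p : ℝ) + 1)) ≤
      (1 / (n : ℝ)) * ((1 / 2) * φs (2 * (n : ℝ) * (p : ℝ)) + (1 / 2) * φs (2 * (n : ℝ))) := by
    apply mul_le_mul_of_nonneg_left key
    positivity
  calc (1 / (n : ℝ)) * φs ((n : ℝ) * ((p : ℝ) + 1))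
      ≤ (1 / (n : ℝ)) * ((1 / 2) * φs (2 * (n : ℝ) * (p : ℝ)) + (1 / 2) * φs (2 * (n : ℝ))) :=
        this
    _ = 1 / (2 * (n : ℝ)) * φs (2 * (n : ℝ)) + 1 / (2 * (n : ℝ)) * φs (2 * (n : ℝ) * (p : ℝ)) := by
        field_simp; ring
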